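/- For an irreducible Markov chain on a finite state space reversible with respect to μ, and pairwise distinct states y, y₁, y₂, one has P_y(τ_{y₁} < τ_{y₂}) ≤ cap(y,y₁)/cap(y,y₂), where cap(z,w) := μ(z)·P_z(τ_w < τ_z⁺) and τ_z⁺ denotes the first return time to z. -/

import Mathlib

open MeasureTheory Filter

/-- First hitting time of `A` in positive time (the first return time when the chain starts
in `A`): `inf {t ≥ 1 : ω t ∈ A}`. -/
noncomputable def retTime {X : Type*} (A : Set X) (ω : ℕ → X) : ℕ :=
  sInf {t : ℕ | 0 < t ∧ ω t ∈ A}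

set_option linter.unusedSectionVars false
set_option maxHeartbeats 1000000

namespace S4
open Finset

variable {X : Type*} [Fintype X] [DecidableEq X]

def Qm (p : Matrix X X ℝ) (S : Finset X) : Matrix X X ℝ :=
  Matrix.of fun a b => if b ∈ S then 0 else p a b

lemma Qm_apply (p : Matrix X X ℝ) (S : Finset X) (a b : X) :
    Qm p S a b = if b ∈ S then 0 else p a b := rfl

lemma Qm_nonneg {p : Matrix X X ℝ} (hnn : ∀ a b, 0 ≤ p a b) (S : Finset X) (a b : X) :
    0 ≤ Qm p S a b := by
  rw [Qm_apply]; split <;> [rfl; exact hnn a b]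

lemma Qm_le {p : Matrix X X ℝ} (hnn : ∀ a b, 0 ≤ p a b) (S : Finset X) (a b : X) :
    Qm p S a b ≤ p a b := by
  rw [Qm_apply]; split <;> [exact hnn a b; rfl]

lemma Qm_mono {p : Matrix X X ℝ} (hnn : ∀ a b, 0 ≤ p a b) {S T : Finset X} (h : S ⊆ T)
    (a b : X) : Qm p T a b ≤ Qm p S a b := by
  rw [Qm_apply, Qm_apply]
  by_cases hb : b ∈ T
  · simp [hb]; split <;> [rfl; exact hnn a b]
  · have : b ∉ S := fun hS => hb (h hS)
    simp [hb, this]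

/-- entrywise: products of entrywise-dominated nonneg matrices -/
lemma mul_le_mul_entry {M M' N N' : Matrix X X ℝ}
    (hM0 : ∀ a b, 0 ≤ M a b) (hN0 : ∀ a b, 0 ≤ N a b)
    (hM : ∀ a b, M a b ≤ M' a b) (hN : ∀ a b, N a b ≤ N' a b) (a b : X) :
    (M * N) a b ≤ (M' * N') a b := by
  rw [Matrix.mul_apply, Matrix.mul_apply]
  apply Finset.sum_le_sum
  intro c _
  exact mul_le_mul (hM a c) (hN c b) (hN0 c b) (le_trans (hM0 a c) (hM a c))

lemma mul_nonneg_entry {M N : Matrix X X ℝ}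
    (hM0 : ∀ a b, 0 ≤ M a b) (hN0 : ∀ a b, 0 ≤ N a b) (a b : X) : 0 ≤ (M * N) a b := by
  rw [Matrix.mul_apply]
  exact Finset.sum_nonneg fun c _ => mul_nonneg (hM0 a c) (hN0 c b)

lemma pow_nonneg_entry {M : Matrix X X ℝ} (hM0 : ∀ a b, 0 ≤ M a b) (n : ℕ) (a b : X) :
    0 ≤ (M ^ n) a b := by
  induction n generalizing a b with
  | zero => rw [pow_zero, Matrix.one_apply]; split <;> norm_num
  | succ n ih => rw [pow_succ]; exact mul_nonneg_entry (fun a b => ih a b) hM0 a b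

lemma pow_le_pow_entry {M M' : Matrix X X ℝ} (hM0 : ∀ a b, 0 ≤ M a b)
    (hM : ∀ a b, M a b ≤ M' a b) (n : ℕ) (a b : X) : (M ^ n) a b ≤ (M' ^ n) a b := by
  induction n generalizing a b with
  | zero => rw [pow_zero, pow_zero]
  | succ n ih =>
      rw [pow_succ, pow_succ]
      exact mul_le_mul_entry (fun a b => pow_nonneg_entry hM0 n a b) hM0 ih hM a b

/-- first-passage expansion -/
lemma expand (A C : Matrix X X ℝ) (n : ℕ) :
    (A + C) ^ n = A ^ n + ∑ t ∈ range n, A ^ t * C * (A + C) ^ (n - 1 - t) := by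
  induction n with
  | zero => simp
  | succ n ih =>
      calc (A + C) ^ (n + 1) = A * (A + C) ^ n + C * (A + C) ^ n := by
            rw [pow_succ', add_mul]
        _ = A ^ (n+1) + (∑ t ∈ range n, A ^ (t+1) * C * (A + C) ^ (n - 1 - t)
              + C * (A + C) ^ n) := by
            rw [ih, mul_add, Finset.mul_sum, ← pow_succ', add_assoc]
            congr 2
            refine Finset.sum_congr rfl fun t ht => ?_
            rw [← mul_assoc, ← mul_assoc, ← pow_succ']
        _ = A ^ (n+1) + ∑ t ∈ range (n+1), A ^ t * C * (A + C) ^ (n + 1 - 1 - t) := by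
            rw [Finset.sum_range_succ' (fun t => A ^ t * C * (A + C) ^ (n + 1 - 1 - t))]
            congr 2
            · refine Finset.sum_congr rfl fun t ht => ?_
              simp only [Finset.mem_range] at ht
              congr 2
              omega
            · rw [pow_zero, one_mul]
              congr 1


lemma sum_snoc {n : ℕ} (F : (Fin (n+1) → X) → ℝ) :
    ∑ g : Fin (n+1) → X, F g = ∑ h : Fin n → X, ∑ x : X, F (Fin.snoc h x) := by
  rw [← Equiv.sum_comp (Fin.snocEquiv (fun _ => X)) F, Fintype.sum_prod_type]
  rw [Finset.sum_comm]
  rfl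

lemma snoc_zero' {n : ℕ} (h : Fin (n+1) → X) (x : X) :
    (Fin.snoc h x : Fin (n+2) → X) 0 = h 0 := by
  rw [show (0 : Fin (n+2)) = Fin.castSucc 0 from rfl, Fin.snoc_castSucc]

lemma pathsum (M : Matrix X X ℝ) (n : ℕ) (a c : X) :
    ∑ g : Fin (n+1) → X, (if g 0 = a ∧ g (Fin.last n) = c
      then ∏ i : Fin n, M (g i.castSucc) (g i.succ) else 0) = (M ^ n) a c := by
  induction n generalizing c with
  | zero =>
      rw [pow_zero, Matrix.one_apply]
      rw [Fintype.sum_equiv (Equiv.funUnique (Fin 1) X)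
        _ (fun x => if x = a ∧ x = c then (1:ℝ) else 0) (fun g => by simp [Equiv.funUnique])]
      by_cases hac : a = c
      · subst hac; simp
      · rw [if_neg hac]
        refine Finset.sum_eq_zero fun x _ => ?_
        rw [if_neg]; rintro ⟨rfl, rfl⟩; exact hac rfl
  | succ n ih =>
      rw [sum_snoc]
      simp only [Fin.prod_univ_castSucc, Fin.succ_castSucc, Fin.snoc_castSucc,
        Fin.succ_last, Fin.snoc_last, snoc_zero']
      simp only [and_comm (a := _ = a), ite_and, Finset.sum_ite_eq', Finset.mem_univ, if_true]
      rw [pow_succ, Matrix.mul_apply]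
      have hr : ∀ d : X, (M ^ n) a d * M d c
          = ∑ h : Fin (n+1) → X, (if h 0 = a ∧ h (Fin.last n) = d
              then (∏ i : Fin n, M (h i.castSucc) (h i.succ)) * M d c else 0) := by
        intro d
        rw [← ih d, Finset.sum_mul]
        refine Finset.sum_congr rfl fun h _ => ?_
        rw [ite_mul, zero_mul]
      rw [Finset.sum_congr rfl fun d _ => hr d, Finset.sum_comm]
      refine Finset.sum_congr rfl fun h _ => ?_
      simp only [ite_and]
      by_cases h0 : h 0 = a
      · simp only [h0, if_true]
        rw [Finset.sum_ite_eq univ (h (Fin.last n))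
          (fun d => (∏ i : Fin n, M (h i.castSucc) (h i.succ)) * M d c)]
        simp
      · simp [h0]
lemma prod_mask (p : Matrix X X ℝ) (S : Finset X) {n : ℕ} (h : Fin (n+1) → X) :
    (if (∀ j : Fin (n+1), 1 ≤ (j:ℕ) → (j:ℕ) ≤ n → h j ∉ S)
      then ∏ i : Fin n, p (h i.castSucc) (h i.succ) else 0)
    = ∏ i : Fin n, Qm p S (h i.castSucc) (h i.succ) := by
  by_cases hc : ∀ j : Fin (n+1), 1 ≤ (j:ℕ) → (j:ℕ) ≤ n → h j ∉ S
  · rw [if_pos hc]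
    refine Finset.prod_congr rfl fun i _ => ?_
    have hmem : h i.succ ∉ S := by
      refine hc i.succ (by simp [Fin.val_succ]) ?_
      simp only [Fin.val_succ]
      omega
    simp [Qm, hmem]
  · rw [if_neg hc]
    push_neg at hc
    obtain ⟨j, hj1, hjn, hjS⟩ := hc
    have hlt : (j : ℕ) - 1 < n := by omega
    refine (Finset.prod_eq_zero (Finset.mem_univ (⟨(j:ℕ)-1, hlt⟩ : Fin n)) ?_).symm
    have hsucc : (⟨(j:ℕ)-1, hlt⟩ : Fin n).succ = j := by
      apply Fin.ext
      simp [Fin.val_succ]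
      omega
    rw [hsucc]
    simp [Qm, hjS]

lemma comb_hit (p : Matrix X X ℝ) (S : Finset X) (n : ℕ) (y b : X) :
    ∑ g : Fin (n+2) → X, (if g 0 = y ∧ (∀ i : Fin (n+2), 1 ≤ (i:ℕ) → (i:ℕ) ≤ n → g i ∉ S)
        ∧ g (Fin.last (n+1)) = b
      then ∏ i : Fin (n+1), p (g i.castSucc) (g i.succ) else 0)
    = ((Qm p S) ^ n * p) y b := by
  rw [sum_snoc]
  have hstep : ∀ (h : Fin (n+1) → X) (x : X),
      (if (Fin.snoc h x : Fin (n+2) → X) 0 = y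
          ∧ (∀ i : Fin (n+2), 1 ≤ (i:ℕ) → (i:ℕ) ≤ n → (Fin.snoc h x : Fin (n+2) → X) i ∉ S)
          ∧ (Fin.snoc h x : Fin (n+2) → X) (Fin.last (n+1)) = b
        then ∏ i : Fin (n+1), p ((Fin.snoc h x : Fin (n+2) → X) i.castSucc)
          ((Fin.snoc h x : Fin (n+2) → X) i.succ) else 0)
      = (if x = b then (if h 0 = y then
          (∏ i : Fin n, Qm p S (h i.castSucc) (h i.succ)) * p (h (Fin.last n)) x else 0) else 0) := by
    intro h x
    have havoid : (∀ i : Fin (n+2), 1 ≤ (i:ℕ) → (i:ℕ) ≤ n → (Fin.snoc h x : Fin (n+2) → X) i ∉ S)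
        ↔ (∀ j : Fin (n+1), 1 ≤ (j:ℕ) → (j:ℕ) ≤ n → h j ∉ S) := by
      constructor
      · intro H j hj1 hjn
        have := H j.castSucc (by simpa using hj1) (by simpa using hjn)
        rwa [Fin.snoc_castSucc] at this
      · intro H i hi1 hin
        have hne : i ≠ Fin.last (n+1) := by
          intro he
          rw [he] at hin
          simp only [Fin.val_last] at hin
          omega
        obtain ⟨j, rfl⟩ := Fin.exists_castSucc_eq.mpr hne
        rw [Fin.snoc_castSucc]
        exact H j (by simpa using hi1) (by simpa using hin)
    have hprod : ∏ i : Fin (n+1), p ((Fin.snoc h x : Fin (n+2) → X) i.castSucc)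
          ((Fin.snoc h x : Fin (n+2) → X) i.succ)
        = (∏ i : Fin n, p (h i.castSucc) (h i.succ)) * p (h (Fin.last n)) x := by
      rw [Fin.prod_univ_castSucc]
      congr 1
      · refine Finset.prod_congr rfl fun i _ => ?_
        rw [Fin.succ_castSucc, Fin.snoc_castSucc, Fin.snoc_castSucc]
      · rw [Fin.succ_last, Fin.snoc_last, Fin.snoc_castSucc]
    rw [snoc_zero', Fin.snoc_last]
    simp only [havoid, hprod]
    by_cases hx : x = b
    · simp only [hx, if_true, and_true]
      by_cases h0 : h 0 = y
      · simp only [h0, true_and, if_true]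
        rw [← prod_mask p S h, ite_mul, zero_mul]
      · simp [h0]
    · simp [hx]
  rw [Finset.sum_congr rfl fun h _ => Finset.sum_congr rfl fun x _ => hstep h x]
  have hx : ∀ h : Fin (n+1) → X, (∑ x : X, if x = b then (if h 0 = y then
      (∏ i : Fin n, Qm p S (h i.castSucc) (h i.succ)) * p (h (Fin.last n)) x else 0) else 0)
      = (if h 0 = y then (∏ i : Fin n, Qm p S (h i.castSucc) (h i.succ)) * p (h (Fin.last n)) b else 0) := by
    intro h
    rw [Finset.sum_ite_eq' univ b (fun x => (if h 0 = y then
      (∏ i : Fin n, Qm p S (h i.castSucc) (h i.succ)) * p (h (Fin.last n)) x else 0))]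
    simp
  rw [Finset.sum_congr rfl fun h _ => hx h]
  have key : ∑ d : X, ((Qm p S) ^ n) y d * p d b
      = ∑ h : Fin (n+1) → X, (if h 0 = y then
          (∏ i : Fin n, Qm p S (h i.castSucc) (h i.succ)) * p (h (Fin.last n)) b else 0) := by
    have hr : ∀ d : X, ((Qm p S) ^ n) y d * p d b
        = ∑ h : Fin (n+1) → X, (if h 0 = y ∧ h (Fin.last n) = d
            then (∏ i : Fin n, Qm p S (h i.castSucc) (h i.succ)) * p d b else 0) := by
      intro d
      rw [← pathsum (Qm p S) n y d, Finset.sum_mul]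
      refine Finset.sum_congr rfl fun h _ => ?_
      rw [ite_mul, zero_mul]
    rw [Finset.sum_congr rfl fun d _ => hr d, Finset.sum_comm]
    refine Finset.sum_congr rfl fun h _ => ?_
    simp only [ite_and]
    by_cases h0 : h 0 = y
    · simp only [h0, if_true]
      rw [Finset.sum_ite_eq univ (h (Fin.last n))
        (fun d => (∏ i : Fin n, Qm p S (h i.castSucc) (h i.succ)) * p d b)]
      simp
    · simp [h0]
  rw [Matrix.mul_apply, key]

lemma comb_avoid (p : Matrix X X ℝ) (S : Finset X) (n : ℕ) (y : X) :
    ∑ g : Fin (n+1) → X, (if g 0 = y ∧ (∀ i : Fin (n+1), 1 ≤ (i:ℕ) → (i:ℕ) ≤ n → g i ∉ S)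
      then ∏ i : Fin n, p (g i.castSucc) (g i.succ) else 0)
    = ∑ b : X, ((Qm p S) ^ n) y b := by
  have hstep : ∀ g : Fin (n+1) → X,
      (if g 0 = y ∧ (∀ i : Fin (n+1), 1 ≤ (i:ℕ) → (i:ℕ) ≤ n → g i ∉ S)
        then ∏ i : Fin n, p (g i.castSucc) (g i.succ) else 0)
      = (if g 0 = y then ∏ i : Fin n, Qm p S (g i.castSucc) (g i.succ) else 0) := by
    intro g
    rw [ite_and, ← prod_mask p S g]
  rw [Finset.sum_congr rfl fun g _ => hstep g]
  have key : ∀ g : Fin (n+1) → X,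
      (if g 0 = y then ∏ i : Fin n, Qm p S (g i.castSucc) (g i.succ) else 0)
      = ∑ b : X, (if g 0 = y ∧ g (Fin.last n) = b
          then ∏ i : Fin n, Qm p S (g i.castSucc) (g i.succ) else 0) := by
    intro g
    simp only [ite_and]
    by_cases h0 : g 0 = y
    · simp only [h0, if_true]
      rw [Finset.sum_ite_eq univ (g (Fin.last n))
        (fun b => ∏ i : Fin n, Qm p S (g i.castSucc) (g i.succ))]
      simp
    · simp [h0]
  rw [Finset.sum_congr rfl fun g _ => key g, Finset.sum_comm]
  exact Finset.sum_congr rfl fun b _ => pathsum (Qm p S) n y b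

-- continuing inside namespace S4, appended to dev.lean for testing
def Cm (p : Matrix X X ℝ) (S : Finset X) : Matrix X X ℝ :=
  Matrix.of fun a b => if b ∈ S then p a b else 0

lemma Qm_add_Cm (p : Matrix X X ℝ) (S : Finset X) : Qm p S + Cm p S = p := by
  ext a b
  simp only [Matrix.add_apply, Qm, Cm, Matrix.of_apply]
  split <;> simp

lemma Qm_split (p : Matrix X X ℝ) {S T : Finset X} (hST : Disjoint S T) :
    Qm p (S ∪ T) + Cm p T = Qm p S := by
  ext a b
  simp only [Matrix.add_apply, Qm, Cm, Matrix.of_apply, Finset.mem_union]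
  by_cases hT : b ∈ T
  · have hS : b ∉ S := fun hS => (Finset.disjoint_left.mp hST hS) hT
    simp [hT, hS]
  · simp [hT]

lemma CmSandwich (p A B : Matrix X X ℝ) (T : Finset X) (x z : X) :
    (A * Cm p T * B) x z = ∑ b ∈ T, (A * p) x b * B b z := by
  have h1 : ∀ b, (A * Cm p T) x b = if b ∈ T then (A * p) x b else 0 := by
    intro b
    rw [Matrix.mul_apply, Matrix.mul_apply]
    by_cases hb : b ∈ T
    · rw [if_pos hb]
      exact Finset.sum_congr rfl fun c _ => by simp [Cm, hb]
    · rw [if_neg hb]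
      exact Finset.sum_eq_zero fun c _ => by simp [Cm, hb]
  rw [Matrix.mul_apply]
  rw [Finset.sum_congr rfl fun b (_ : b ∈ univ) => by rw [h1 b, ite_mul, zero_mul]]
  rw [Finset.sum_ite_mem, Finset.univ_inter]

lemma rowsum_Qm {p : Matrix X X ℝ} (hrow : ∀ a, ∑ b, p a b = 1) (S : Finset X) (c : X) :
    ∑ b, Qm p S c b = 1 - ∑ b ∈ S, p c b := by
  have : ∀ b : X, Qm p S c b = p c b - (if b ∈ S then p c b else 0) := by
    intro b; simp only [Qm, Matrix.of_apply]; split <;> simp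
  rw [Finset.sum_congr rfl fun b _ => this b, Finset.sum_sub_distrib, hrow]
  congr 1
  rw [Finset.sum_ite_mem, Finset.univ_inter]

lemma rowsum_pow {p : Matrix X X ℝ} (hrow : ∀ a, ∑ b, p a b = 1) (n : ℕ) (a : X) :
    ∑ b, (p ^ n) a b = 1 := by
  induction n generalizing a with
  | zero => simp [Matrix.one_apply]
  | succ n ih =>
      rw [pow_succ]
      simp only [Matrix.mul_apply]
      rw [Finset.sum_comm]
      rw [Finset.sum_congr rfl fun c (_ : c ∈ univ) => by
        rw [← Finset.mul_sum, hrow c, mul_one]]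
      exact ih a

lemma pow_entry_le_one {p : Matrix X X ℝ} (hnn : ∀ a b, 0 ≤ p a b)
    (hrow : ∀ a, ∑ b, p a b = 1) (n : ℕ) (a b : X) : (p ^ n) a b ≤ 1 := by
  rw [← rowsum_pow hrow n a]
  exact Finset.single_le_sum (fun c _ => pow_nonneg_entry hnn n a c) (Finset.mem_univ b)

lemma Qm_pow_col_zero {p : Matrix X X ℝ} (S : Finset X) {b : X} (hb : b ∈ S) {n : ℕ}
    (hn : 1 ≤ n) (a : X) : ((Qm p S) ^ n) a b = 0 := by
  obtain ⟨m, rfl⟩ : ∃ m, n = m + 1 := ⟨n - 1, by omega⟩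
  rw [pow_succ, Matrix.mul_apply]
  exact Finset.sum_eq_zero fun c _ => by simp [Qm, hb]

/-- telescoping identity: total hit prob up to n plus avoidance prob equals 1 -/
lemma telescope {p : Matrix X X ℝ} (hrow : ∀ a, ∑ b, p a b = 1) (S : Finset X) (y : X)
    (n : ℕ) :
    (∑ m ∈ range n, ∑ b ∈ S, ((Qm p S) ^ m * p) y b) + (∑ b, ((Qm p S) ^ n) y b) = 1 := by
  induction n with
  | zero => simp [Matrix.one_apply]
  | succ n ih =>
      rw [Finset.sum_range_succ]
      have e1 : ∑ b, ((Qm p S) ^ (n+1)) y b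
          = ∑ c, ((Qm p S) ^ n) y c * (1 - ∑ b ∈ S, p c b) := by
        rw [pow_succ]
        simp only [Matrix.mul_apply]
        rw [Finset.sum_comm]
        exact Finset.sum_congr rfl fun c _ => by rw [← Finset.mul_sum, rowsum_Qm hrow S c]
      have e2 : ∑ b ∈ S, ((Qm p S) ^ n * p) y b
          = ∑ c, ((Qm p S) ^ n) y c * ∑ b ∈ S, p c b := by
        simp only [Matrix.mul_apply]
        rw [Finset.sum_comm]
        exact Finset.sum_congr rfl fun c _ => by rw [Finset.mul_sum]
      have hstep : ∑ b, ((Qm p S) ^ (n+1)) y b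
          = (∑ b, ((Qm p S) ^ n) y b) - ∑ b ∈ S, ((Qm p S) ^ n * p) y b := by
        rw [e1, e2, ← Finset.sum_sub_distrib]
        exact Finset.sum_congr rfl fun c _ => by ring
      rw [hstep]
      linarith


lemma hitsum_nonneg {p : Matrix X X ℝ} (hnn : ∀ a b, 0 ≤ p a b) (S : Finset X) (n : ℕ)
    (x b : X) : 0 ≤ ((Qm p S) ^ n * p) x b :=
  mul_nonneg_entry (fun a b => pow_nonneg_entry (Qm_nonneg hnn S) n a b) hnn x b

lemma hitsum_mono {p : Matrix X X ℝ} (hnn : ∀ a b, 0 ≤ p a b) {S T : Finset X} (h : S ⊆ T)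
    (n : ℕ) (x b : X) : ((Qm p T) ^ n * p) x b ≤ ((Qm p S) ^ n * p) x b :=
  mul_le_mul_entry (fun a b => pow_nonneg_entry (Qm_nonneg hnn T) n a b) hnn
    (fun a b => pow_le_pow_entry (Qm_nonneg hnn T) (Qm_mono hnn h) n a b)
    (fun _ _ => le_refl _) x b

lemma hitsum_le_pow {p : Matrix X X ℝ} (hnn : ∀ a b, 0 ≤ p a b) (S : Finset X) (n : ℕ)
    (x b : X) : ((Qm p S) ^ n * p) x b ≤ (p ^ (n+1)) x b := by
  rw [pow_succ]
  exact mul_le_mul_entry (fun a b => pow_nonneg_entry (Qm_nonneg hnn S) n a b) hnn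
    (fun a b => pow_le_pow_entry (Qm_nonneg hnn S) (Qm_le hnn S) n a b)
    (fun _ _ => le_refl _) x b

lemma avoid_nonneg {p : Matrix X X ℝ} (hnn : ∀ a b, 0 ≤ p a b) (S : Finset X) (n : ℕ)
    (x : X) : 0 ≤ ∑ b, ((Qm p S) ^ n) x b :=
  Finset.sum_nonneg fun b _ => pow_nonneg_entry (Qm_nonneg hnn S) n x b

lemma avoid_le_one {p : Matrix X X ℝ} (hnn : ∀ a b, 0 ≤ p a b)
    (hrow : ∀ a, ∑ b, p a b = 1) (S : Finset X) (n : ℕ) (x : X) :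
    ∑ b, ((Qm p S) ^ n) x b ≤ 1 := by
  have ht := telescope hrow S x n
  have hh : 0 ≤ ∑ m ∈ range n, ∑ b ∈ S, ((Qm p S) ^ m * p) x b :=
    Finset.sum_nonneg fun m _ => Finset.sum_nonneg fun b _ => hitsum_nonneg hnn S m x b
  linarith

lemma avoid_antitone {p : Matrix X X ℝ} (hnn : ∀ a b, 0 ≤ p a b)
    (hrow : ∀ a, ∑ b, p a b = 1) (S : Finset X) {m n : ℕ} (hmn : m ≤ n) (x : X) :
    ∑ b, ((Qm p S) ^ n) x b ≤ ∑ b, ((Qm p S) ^ m) x b := by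
  obtain ⟨k, rfl⟩ : ∃ k, n = m + k := ⟨n - m, by omega⟩
  clear hmn
  induction k with
  | zero => rfl
  | succ k ih =>
      refine le_trans ?_ ih
      have t1 := telescope hrow S x (m+k)
      have t2 := telescope hrow S x (m+k+1)
      rw [Finset.sum_range_succ] at t2
      have hh : 0 ≤ ∑ b ∈ S, ((Qm p S) ^ (m+k) * p) x b :=
        Finset.sum_nonneg fun b _ => hitsum_nonneg hnn S (m+k) x b
      have : m + (k+1) = m + k + 1 := by omega
      rw [this]
      linarith

lemma avoid_submult {p : Matrix X X ℝ} (hnn : ∀ a b, 0 ≤ p a b) (S : Finset X)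
    (N M : ℕ) (x : X) (e : ℝ) (he : ∀ c, ∑ b, ((Qm p S) ^ M) c b ≤ e) :
    ∑ b, ((Qm p S) ^ (N+M)) x b ≤ (∑ b, ((Qm p S) ^ N) x b) * e := by
  rw [pow_add]
  simp only [Matrix.mul_apply]
  rw [Finset.sum_comm, Finset.sum_mul]
  refine Finset.sum_le_sum fun c _ => ?_
  rw [← Finset.mul_sum]
  exact mul_le_mul_of_nonneg_left (he c) (pow_nonneg_entry (Qm_nonneg hnn S) N x c)

lemma hit_ge_pow {p : Matrix X X ℝ} (hnn : ∀ a b, 0 ≤ p a b)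
    (hrow : ∀ a, ∑ b, p a b = 1) (z x : X) {n : ℕ} (hn : 1 ≤ n) :
    (p ^ n) x z ≤ ∑ m ∈ range n, ((Qm p {z}) ^ m * p) x z := by
  have hp : Qm p {z} + Cm p {z} = p := Qm_add_Cm p {z}
  have hexp := expand (Qm p {z}) (Cm p {z}) n
  rw [hp] at hexp
  have happ := congrArg (fun M : Matrix X X ℝ => M x z) hexp
  simp only [Matrix.add_apply, Matrix.sum_apply] at happ
  rw [happ, Qm_pow_col_zero _ (Finset.mem_singleton_self z) hn, zero_add]
  refine Finset.sum_le_sum fun t ht => ?_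
  rw [CmSandwich, Finset.sum_singleton]
  calc ((Qm p {z}) ^ t * p) x z * (p ^ (n-1-t)) z z
      ≤ ((Qm p {z}) ^ t * p) x z * 1 :=
        mul_le_mul_of_nonneg_left (pow_entry_le_one hnn hrow _ z z)
          (hitsum_nonneg hnn {z} t x z)
    _ = _ := mul_one _

lemma inner_tri (l : ℕ → ℝ) (t : ℕ) : ∀ N : ℕ,
    ∑ m ∈ range N, (if t < m then l (m-1-t) else 0) = ∑ j ∈ range (N - (t+1)), l j := by
  intro N
  induction N with
  | zero => simp
  | succ N ih =>
      rw [Finset.sum_range_succ, ih]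
      by_cases htN : t < N
      · rw [if_pos htN]
        have h1 : N + 1 - (t+1) = (N - (t+1)) + 1 := by omega
        rw [h1, Finset.sum_range_succ]
        congr 2
        omega
      · rw [if_neg htN, add_zero]
        have heq : N + 1 - (t+1) = N - (t+1) := by omega
        rw [heq]

lemma double_bound (r l : ℕ → ℝ) (hr : ∀ t, 0 ≤ r t) (Λ : ℝ)
    (hΛ : ∀ K, ∑ j ∈ range K, l j ≤ Λ) (N : ℕ) :
    ∑ m ∈ range N, ∑ t ∈ range m, r t * l (m-1-t) ≤ (∑ t ∈ range N, r t) * Λ := by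
  have hext : ∀ m ∈ range N, ∑ t ∈ range m, r t * l (m-1-t)
      = ∑ t ∈ range N, (if t < m then r t * l (m-1-t) else 0) := by
    intro m hm
    have h1 : ∑ t ∈ range m, r t * l (m-1-t)
        = ∑ t ∈ range m, (if t < m then r t * l (m-1-t) else 0) :=
      Finset.sum_congr rfl fun t ht => (if_pos (Finset.mem_range.mp ht)).symm
    rw [h1]
    exact Finset.sum_subset (Finset.range_subset_range.mpr (Finset.mem_range.mp hm).le)
      (fun t _ ht => if_neg (fun hlt => ht (Finset.mem_range.mpr hlt)))
  rw [Finset.sum_congr rfl hext, Finset.sum_comm, Finset.sum_mul]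
  refine Finset.sum_le_sum fun t _ => ?_
  have h2 : ∀ m : ℕ, (if t < m then r t * l (m-1-t) else 0)
      = r t * (if t < m then l (m-1-t) else 0) := by
    intro m; split <;> simp
  rw [Finset.sum_congr rfl fun m _ => h2 m, ← Finset.mul_sum, inner_tri l t N]
  exact mul_le_mul_of_nonneg_left (hΛ _) (hr t)

lemma renewal {p : Matrix X X ℝ} (hnn : ∀ a b, 0 ≤ p a b)
    (y y₁ y₂ : X) (h1 : y ≠ y₁) (h2 : y ≠ y₂) (Λ : ℝ)
    (hΛ : ∀ K, ∑ m ∈ range K, ((Qm p {y₁,y₂}) ^ m * p) y y₁ ≤ Λ) (N : ℕ) :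
    ∑ m ∈ range N, ((Qm p {y₁,y₂}) ^ m * p) y y₁
      ≤ (∑ m ∈ range N, ((Qm p (insert y {y₁,y₂})) ^ m * p) y y₁)
        + (∑ t ∈ range N, ((Qm p (insert y {y₁,y₂})) ^ t * p) y y) * Λ := by
  have hset : ({y₁,y₂} : Finset X) ∪ {y} = insert y {y₁,y₂} := by
    ext a; simp; tauto
  have hdisj : Disjoint ({y₁,y₂} : Finset X) ({y} : Finset X) := by
    simp only [Finset.disjoint_singleton_right, Finset.mem_insert, Finset.mem_singleton]
    push_neg
    exact ⟨h1, h2⟩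
  have hAC : Qm p (insert y {y₁,y₂}) + Cm p {y} = Qm p {y₁,y₂} := by
    rw [← hset]; exact Qm_split p hdisj
  set A := Qm p (insert y {y₁,y₂}) with hA
  have hterm : ∀ m, ((Qm p {y₁,y₂}) ^ m * p) y y₁
      = (A ^ m * p) y y₁ + ∑ t ∈ range m,
          (A ^ t * p) y y * ((Qm p {y₁,y₂}) ^ (m-1-t) * p) y y₁ := by
    intro m
    rw [← hAC]
    have hexp := expand A (Cm p {y}) m
    have happ := congrArg (fun M : Matrix X X ℝ => (M * p) y y₁) hexp
    simp only [add_mul, Finset.sum_mul, Matrix.add_apply, Matrix.sum_apply] at happ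
    rw [happ]
    congr 1
    refine Finset.sum_congr rfl fun t ht => ?_
    rw [mul_assoc (A ^ t * Cm p {y}) _ p, CmSandwich, Finset.sum_singleton]
  rw [Finset.sum_congr rfl fun m _ => hterm m, Finset.sum_add_distrib]
  have := double_bound (fun t => (A ^ t * p) y y)
    (fun j => ((Qm p {y₁,y₂}) ^ j * p) y y₁)
    (fun t => hitsum_nonneg hnn _ t y y) Λ hΛ N
  linarith

lemma min_path_pos {p : Matrix X X ℝ} (hnn : ∀ a b, 0 ≤ p a b) (y y₂ : X) (h2 : y ≠ y₂)
    {n : ℕ} (hn : 1 ≤ n) (hpos : 0 < (p ^ n) y y₂)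
    (hmin : ∀ m, 1 ≤ m → m < n → ¬ (0 < (p ^ m) y y₂)) :
    0 < ((Qm p {y,y₂}) ^ (n-1) * p) y y₂ := by
  have hzero : ∀ m, 1 ≤ m → m < n → (p ^ m) y y₂ = 0 := fun m hm1 hm2 =>
    le_antisymm (not_lt.mp (hmin m hm1 hm2)) (pow_nonneg_entry hnn m y y₂)
  have hp : Qm p {y,y₂} + Cm p {y,y₂} = p := Qm_add_Cm p {y,y₂}
  set A := Qm p {y,y₂} with hA
  have hexp := expand A (Cm p {y,y₂}) n
  rw [hp] at hexp
  have happ := congrArg (fun M : Matrix X X ℝ => M y y₂) hexp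
  simp only [Matrix.add_apply, Matrix.sum_apply] at happ
  have hcol : (A ^ n) y y₂ = 0 :=
    Qm_pow_col_zero _ (by simp) hn y
  obtain ⟨k, rfl⟩ : ∃ k, n = k + 1 := ⟨n - 1, by omega⟩
  rw [happ, hcol, zero_add, Finset.sum_range_succ] at hpos
  have hvanish : ∀ t ∈ range k, (A ^ t * Cm p {y,y₂} * p ^ (k+1-1-t)) y y₂ = 0 := by
    intro t ht
    have htk : t < k := Finset.mem_range.mp ht
    rw [CmSandwich, Finset.sum_pair h2]
    have hz1 : (p ^ (k+1-1-t)) y y₂ = 0 := hzero _ (by omega) (by omega)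
    have hz2 : (A ^ t * p) y y₂ = 0 := by
      refine le_antisymm ?_ (hitsum_nonneg hnn _ t y y₂)
      calc (A ^ t * p) y y₂ ≤ (p ^ (t+1)) y y₂ := hitsum_le_pow hnn _ t y y₂
        _ = 0 := hzero _ (by omega) (by omega)
    rw [hz1, hz2, mul_zero, zero_mul, add_zero]
  rw [Finset.sum_congr rfl hvanish, Finset.sum_const_zero, zero_add] at hpos
  have hlast : (A ^ k * Cm p {y,y₂} * p ^ (k+1-1-k)) y y₂ = (A ^ k * p) y y₂ := by
    rw [CmSandwich, Finset.sum_pair h2]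
    have : k + 1 - 1 - k = 0 := by omega
    rw [this, pow_zero, Matrix.one_apply_ne h2, Matrix.one_apply_eq, mul_zero, mul_one,
      zero_add]
  rw [hlast] at hpos
  simpa using hpos
section Meas
variable [MeasurableSpace X]

/-- every measurable set in the product space is invariant under a coordinatewise
measurably-invisible swap -/
lemma swap_invariant {u v : X} (hsep : ∀ S : Set X, MeasurableSet S → (u ∈ S ↔ v ∈ S))
    {M : Set (ℕ → X)} (hM : MeasurableSet M) :
    (fun ω : ℕ → X => (Equiv.swap u v) ∘ ω) ⁻¹' M = M := by
  have hS : ∀ S : Set X, MeasurableSet S → (Equiv.swap u v) ⁻¹' S = S := by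
    intro S hSm
    ext z
    rcases eq_or_ne z u with rfl | hzu
    · simp only [Set.mem_preimage, Equiv.swap_apply_left]
      exact (hsep S hSm).symm
    rcases eq_or_ne z v with rfl | hzv
    · simp only [Set.mem_preimage, Equiv.swap_apply_right]
      exact hsep S hSm
    · rw [Set.mem_preimage, Equiv.swap_apply_of_ne_of_ne hzu hzv]
  suffices hgen : ∀ M : Set (ℕ → X), MeasurableSpace.GenerateMeasurable
      {s : Set (ℕ → X) | ∃ i : ℕ,
        MeasurableSet[MeasurableSpace.comap (fun ω => ω i) ‹MeasurableSpace X›] s} M →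
      (fun ω : ℕ → X => (Equiv.swap u v) ∘ ω) ⁻¹' M = M by
    apply hgen
    have hM' : MeasurableSet[⨆ i : ℕ,
        MeasurableSpace.comap (fun ω : ℕ → X => ω i) ‹MeasurableSpace X›] M := hM
    rwa [MeasurableSpace.measurableSet_iSup] at hM'
  intro M hM'
  induction hM' with
  | basic s hs =>
      obtain ⟨i, t, htm, rfl⟩ := hs
      ext ω
      simp only [Set.mem_preimage, Function.comp_apply]
      rw [← Set.mem_preimage (f := Equiv.swap u v), hS t htm]
  | empty => simp
  | compl s _ ih => rw [Set.preimage_compl, ih]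
  | iUnion f _ ih =>
      rw [Set.preimage_iUnion]
      exact Set.iUnion_congr ih




lemma insep_col_zero (p : Matrix X X ℝ) (hnn : ∀ a b, 0 ≤ p a b)
    (hrow : ∀ a, ∑ b, p a b = 1)
    (P : X → Measure (ℕ → X))
    (hP : ∀ (x : X) (n : ℕ) (f : ℕ → X), f 0 = x →
      P x {ω | ∀ i ≤ n, ω i = f i} = ∏ i ∈ Finset.range n, ENNReal.ofReal (p (f i) (f (i+1))))
    {u v : X} (huv : u ≠ v)
    (hsep : ∀ S : Set X, MeasurableSet S → (u ∈ S ↔ v ∈ S))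
    {x : X} (hxu : x ≠ u) (hxv : x ≠ v) : p x v = 0 := by
  classical
  set C : X → Set (ℕ → X) := fun b => {ω | ω 0 = x ∧ ω 1 = b} with hC
  have hPC : ∀ b, P x (C b) = ENNReal.ofReal (p x b) := by
    intro b
    have hf := hP x 1 (fun i => if i = 0 then x else b) (by simp)
    have hset : {ω : ℕ → X | ∀ i ≤ 1, ω i = (fun i => if i = 0 then x else b) i} = C b := by
      ext ω
      constructor
      · intro h
        exact ⟨by simpa using h 0 (by omega), by simpa using h 1 (by omega)⟩
      · rintro ⟨h0, h1⟩ i hi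
        interval_cases i
        · simpa using h0
        · simpa using h1
    rw [hset] at hf
    rw [hf, Finset.prod_range_one]
    simp
  have h1 : P x {ω : ℕ → X | ω 0 = x} = 1 := by
    have hf := hP x 0 (fun _ => x) rfl
    have hset : {ω : ℕ → X | ∀ i ≤ 0, ω i = x} = {ω : ℕ → X | ω 0 = x} := by
      ext ω
      constructor
      · intro h; exact h 0 (le_refl 0)
      · intro h i hi
        have : i = 0 := by omega
        rw [this]; exact h
    rw [hset] at hf
    simpa using hf
  have hM := fun b => MeasureTheory.exists_measurable_superset (P x) (C b)
  choose M hM1 hM2 hM3 using hM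
  have hswap : ∀ b, C ((Equiv.swap u v) b) ⊆ M b := by
    intro b ω hω
    obtain ⟨h0, h1⟩ : ω 0 = x ∧ ω 1 = (Equiv.swap u v) b := hω
    have hΦ : (fun ω : ℕ → X => (Equiv.swap u v) ∘ ω) ω ∈ C b := by
      show (Equiv.swap u v) (ω 0) = x ∧ (Equiv.swap u v) (ω 1) = b
      constructor
      · rw [h0, Equiv.swap_apply_of_ne_of_ne hxu hxv]
      · rw [h1, Equiv.swap_apply_self]
    have h' : ω ∈ (fun ω : ℕ → X => (Equiv.swap u v) ∘ ω) ⁻¹' (M b) :=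
      Set.mem_preimage.mpr (Set.mem_of_mem_of_subset hΦ (hM1 b))
    rwa [swap_invariant hsep (hM2 b)] at h'
  have hcover : {ω : ℕ → X | ω 0 = x} ⊆ ⋃ b ∈ Finset.univ.erase v, M b := by
    intro ω hω
    by_cases hb : ω 1 = v
    · refine Set.mem_biUnion (Finset.mem_erase.mpr ⟨huv, Finset.mem_univ u⟩) ?_
      refine hswap u (show ω 0 = x ∧ ω 1 = (Equiv.swap u v) u from ⟨hω, ?_⟩)
      rw [hb, Equiv.swap_apply_left]
    · exact Set.mem_biUnion (Finset.mem_erase.mpr ⟨hb, Finset.mem_univ _⟩)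
        (Set.mem_of_mem_of_subset (show ω 0 = x ∧ ω 1 = ω 1 from ⟨hω, rfl⟩) (hM1 (ω 1)))
  have hle : (1 : ENNReal) ≤ ENNReal.ofReal (∑ b ∈ Finset.univ.erase v, p x b) := by
    calc (1 : ENNReal) = P x {ω : ℕ → X | ω 0 = x} := h1.symm
      _ ≤ P x (⋃ b ∈ Finset.univ.erase v, M b) := measure_mono hcover
      _ ≤ ∑ b ∈ Finset.univ.erase v, P x (M b) :=
          measure_biUnion_finset_le _ _
      _ = ∑ b ∈ Finset.univ.erase v, ENNReal.ofReal (p x b) := by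
          refine Finset.sum_congr rfl fun b _ => ?_
          rw [hM3 b, hPC b]
      _ = ENNReal.ofReal (∑ b ∈ Finset.univ.erase v, p x b) :=
          (ENNReal.ofReal_sum_of_nonneg fun b _ => hnn x b).symm
  have hsum : ∑ b ∈ Finset.univ.erase v, p x b = 1 - p x v := by
    have := Finset.add_sum_erase Finset.univ (p x) (Finset.mem_univ v)
    rw [hrow x] at this
    linarith
  rw [hsum, ENNReal.one_le_ofReal] at hle
  have := hnn x v
  linarith

lemma all_measurable (p : Matrix X X ℝ) (hnn : ∀ a b, 0 ≤ p a b)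
    (hrow : ∀ a, ∑ b, p a b = 1) (hirr : ∀ a b : X, ∃ n : ℕ, 0 < (p ^ n) a b)
    (P : X → Measure (ℕ → X))
    (hP : ∀ (x : X) (n : ℕ) (f : ℕ → X), f 0 = x →
      P x {ω | ∀ i ≤ n, ω i = f i} = ∏ i ∈ Finset.range n, ENNReal.ofReal (p (f i) (f (i+1))))
    (y y₁ y₂ : X) (h1 : y ≠ y₁) (h2 : y ≠ y₂) (h12 : y₁ ≠ y₂) :
    ∀ s : Set X, MeasurableSet s := by
  classical
  have hsing : ∀ u v : X, u ≠ v → ∃ S : Set X, MeasurableSet S ∧ u ∈ S ∧ v ∉ S := by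
    intro u v huv
    by_contra hno
    push_neg at hno
    have hsep : ∀ S : Set X, MeasurableSet S → (u ∈ S ↔ v ∈ S) := by
      intro S hS
      constructor
      · exact hno S hS
      · intro hv
        by_contra hu
        exact (hno Sᶜ hS.compl hu) hv
    obtain ⟨x, hxu, hxv⟩ : ∃ x : X, x ≠ u ∧ x ≠ v := by
      by_cases hyu : y = u
      · by_cases hy1v : y₁ = v
        · refine ⟨y₂, fun h => h2 (hyu.trans h.symm), fun h => h12 (hy1v.trans h.symm)⟩
        · by_cases hy1u : y₁ = u
          · exact absurd (hyu.trans hy1u.symm) h1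
          · exact ⟨y₁, hy1u, hy1v⟩
      · by_cases hyv : y = v
        · by_cases hy1u : y₁ = u
          · refine ⟨y₂, fun h => h12 (hy1u.trans h.symm), fun h => h2 (hyv.trans h.symm)⟩
          · by_cases hy1v : y₁ = v
            · exact absurd (hyv.trans hy1v.symm) h1
            · exact ⟨y₁, hy1u, hy1v⟩
        · exact ⟨y, hyu, hyv⟩
    have hsep' : ∀ S : Set X, MeasurableSet S → (v ∈ S ↔ u ∈ S) :=
      fun S hS => (hsep S hS).symm
    have hcol : ∀ x : X, x ≠ u → x ≠ v → p x u = 0 ∧ p x v = 0 := fun x hxu hxv =>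
      ⟨insep_col_zero p hnn hrow P hP huv.symm hsep' hxv hxu,
       insep_col_zero p hnn hrow P hP huv hsep hxu hxv⟩
    have hind : ∀ n : ℕ, (p ^ n) x u = 0 ∧ (p ^ n) x v = 0 := by
      intro n
      induction n with
      | zero => exact ⟨Matrix.one_apply_ne hxu, Matrix.one_apply_ne hxv⟩
      | succ n ih =>
          constructor <;>
            (rw [pow_succ, Matrix.mul_apply]; refine Finset.sum_eq_zero fun c _ => ?_) <;>
            (rcases eq_or_ne c u with rfl | hcu;
              · rw [ih.1, zero_mul])
          · rcases eq_or_ne c v with rfl | hcv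
            · rw [ih.2, zero_mul]
            · rw [(hcol c hcu hcv).1, mul_zero]
          · rcases eq_or_ne c v with rfl | hcv
            · rw [ih.2, zero_mul]
            · rw [(hcol c hcu hcv).2, mul_zero]
    obtain ⟨n, hn⟩ := hirr x u
    rw [(hind n).1] at hn
    exact lt_irrefl 0 hn
  have hsingleton : ∀ z : X, MeasurableSet ({z} : Set X) := by
    intro z
    have hT : ∀ w : X, ∃ T : Set X, MeasurableSet T ∧ z ∈ T ∧ (w ≠ z → w ∉ T) := by
      intro w
      by_cases hw : w = z
      · exact ⟨Set.univ, MeasurableSet.univ, Set.mem_univ z, fun h => absurd hw h⟩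
      · obtain ⟨S, hSm, hzS, hwS⟩ := hsing z w (fun h => hw h.symm)
        exact ⟨S, hSm, hzS, fun _ => hwS⟩
    choose T hTm hTz hTw using hT
    have hzeq : ({z} : Set X) = ⋂ w, T w := by
      ext ζ
      constructor
      · rintro rfl
        exact Set.mem_iInter.mpr fun w => hTz w
      · intro hζ
        by_contra hne
        have hζz : ζ ≠ z := by simpa using hne
        exact hTw ζ hζz (Set.mem_iInter.mp hζ ζ)
    rw [hzeq]
    exact MeasurableSet.iInter fun w => hTm w
  intro s
  haveI : MeasurableSingletonClass X := ⟨hsingleton⟩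
  exact s.toFinite.measurableSet

end Meas
/-- extension of a finite path to an infinite one -/
def extend {m : ℕ} (g : Fin (m+1) → X) : ℕ → X :=
  fun i => if h : i < m+1 then g ⟨i, h⟩ else g (Fin.last m)

lemma extend_lt {m : ℕ} (g : Fin (m+1) → X) {i : ℕ} (h : i < m+1) :
    extend g i = g ⟨i, h⟩ := dif_pos h

lemma extend_prod (p : Matrix X X ℝ) {m : ℕ} (g : Fin (m+1) → X) :
    ∏ i ∈ range m, p (extend g i) (extend g (i+1))
      = ∏ i : Fin m, p (g i.castSucc) (g i.succ) := by
  rw [← Fin.prod_univ_eq_prod_range (fun i => p (extend g i) (extend g (i+1))) m]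
  refine Finset.prod_congr rfl fun i _ => ?_
  have e1 : extend g (i : ℕ) = g i.castSucc := by
    rw [extend_lt g (by omega : (i:ℕ) < m+1)]
    exact congrArg g (Fin.ext (by simp))
  have e2 : extend g ((i : ℕ)+1) = g i.succ := by
    rw [extend_lt g (by omega : (i:ℕ)+1 < m+1)]
    exact congrArg g (Fin.ext (by simp))
  rw [e1, e2]

section Meas2
variable [MeasurableSpace X]

/-- probability of a coordinate-determined event as a sum of path weights -/
lemma P_cyl_sum (p : Matrix X X ℝ) (hnn : ∀ a b, 0 ≤ p a b)
    (hm : ∀ s : Set X, MeasurableSet s) (y : X) (Pm : Measure (ℕ → X))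
    (hP : ∀ (k : ℕ) (f : ℕ → X), f 0 = y →
      Pm {ω | ∀ i ≤ k, ω i = f i} = ∏ i ∈ Finset.range k, ENNReal.ofReal (p (f i) (f (i+1))))
    (m : ℕ) (cond : (Fin (m+1) → X) → Prop) [DecidablePred cond]
    (hcond : ∀ g, cond g → g 0 = y)
    (E : Set (ℕ → X)) (hE : ∀ ω, ω ∈ E ↔ cond (fun i : Fin (m+1) => ω i)) :
    Pm E = ENNReal.ofReal (∑ g ∈ Finset.univ.filter cond,
      ∏ i ∈ range m, p (extend g i) (extend g (i+1))) := by
  classical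
  set Cyl : (Fin (m+1) → X) → Set (ℕ → X) :=
    fun g => {ω | ∀ i ≤ m, ω i = extend g i} with hCyl
  have hEq : E = ⋃ g ∈ Finset.univ.filter cond, Cyl g := by
    ext ω
    constructor
    · intro hω
      refine Set.mem_biUnion (Finset.mem_filter.mpr ⟨Finset.mem_univ _, (hE ω).mp hω⟩) ?_
      intro i hi
      rw [extend_lt _ (by omega : i < m+1)]
    · intro hω
      obtain ⟨g, hg, hωg⟩ := Set.mem_iUnion₂.mp hω
      have hrest : (fun i : Fin (m+1) => ω i) = g := by
        funext i
        have := hωg (i : ℕ) (by omega)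
        rw [this, extend_lt g (by omega : (i:ℕ) < m+1)]
      rw [hE ω, hrest]
      exact (Finset.mem_filter.mp hg).2
  have hdisj : (↑(Finset.univ.filter cond) : Set (Fin (m+1) → X)).PairwiseDisjoint Cyl := by
    intro g hg g' hg' hne
    rw [Function.onFun, Set.disjoint_left]
    intro ω hω hω'
    refine hne (funext fun i => ?_)
    have e1 := hω (i : ℕ) (by omega)
    have e2 := hω' (i : ℕ) (by omega)
    rw [extend_lt g (by omega : (i:ℕ) < m+1)] at e1
    rw [extend_lt g' (by omega : (i:ℕ) < m+1)] at e2
    have f1 : g i = g ⟨(i:ℕ), by omega⟩ := congrArg g (Fin.ext (by simp))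
    have f2 : g' i = g' ⟨(i:ℕ), by omega⟩ := congrArg g' (Fin.ext (by simp))
    rw [f1, f2, ← e1, ← e2]
  have hmeas : ∀ g ∈ Finset.univ.filter cond, MeasurableSet (Cyl g) := by
    intro g _
    have : Cyl g = ⋂ (i : ℕ) (_ : i ≤ m), (fun ω : ℕ → X => ω i) ⁻¹' {extend g i} := by
      ext ω
      simp only [Set.mem_iInter, Set.mem_preimage, Set.mem_singleton_iff]
      rfl
    rw [this]
    exact MeasurableSet.iInter fun i => MeasurableSet.iInter fun _ =>
      measurable_pi_apply i (hm _)
  rw [hEq, measure_biUnion_finset hdisj hmeas]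
  rw [ENNReal.ofReal_sum_of_nonneg fun g _ =>
    Finset.prod_nonneg fun i _ => hnn _ _]
  refine Finset.sum_congr rfl fun g hg => ?_
  have hg0 : extend g 0 = y := by
    rw [extend_lt g (by omega : 0 < m+1)]
    exact hcond g (Finset.mem_filter.mp hg).2
  rw [hP m (extend g) hg0]
  rw [ENNReal.ofReal_prod_of_nonneg fun i _ => hnn _ _]

end Meas2
def evHit (S : Finset X) (y : X) (n : ℕ) (b : X) : Set (ℕ → X) :=
  {ω | ω 0 = y ∧ (∀ i : ℕ, 1 ≤ i → i ≤ n → ω i ∉ S) ∧ ω (n+1) = b}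

def evAvoid (S : Finset X) (y : X) (n : ℕ) : Set (ℕ → X) :=
  {ω | ω 0 = y ∧ (∀ i : ℕ, 1 ≤ i → i ≤ n → ω i ∉ S)}

section Meas3
variable [MeasurableSpace X]

lemma P_evHit (p : Matrix X X ℝ) (hnn : ∀ a b, 0 ≤ p a b)
    (hm : ∀ s : Set X, MeasurableSet s) (y : X) (Pm : Measure (ℕ → X))
    (hP : ∀ (k : ℕ) (f : ℕ → X), f 0 = y →
      Pm {ω | ∀ i ≤ k, ω i = f i} = ∏ i ∈ Finset.range k, ENNReal.ofReal (p (f i) (f (i+1))))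
    (S : Finset X) (n : ℕ) (b : X) :
    Pm (evHit S y n b) = ENNReal.ofReal (((Qm p S) ^ n * p) y b) := by
  classical
  have hE : ∀ ω : ℕ → X, ω ∈ evHit S y n b ↔
      (fun g : Fin (n+2) → X => g 0 = y
        ∧ (∀ i : Fin (n+2), 1 ≤ (i:ℕ) → (i:ℕ) ≤ n → g i ∉ S)
        ∧ g (Fin.last (n+1)) = b) (fun i : Fin (n+2) => ω i) := by
    intro ω
    constructor
    · rintro ⟨h0, havoid, hb⟩
      exact ⟨h0, fun i hi1 hin => havoid (i:ℕ) hi1 hin, hb⟩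
    · rintro ⟨h0, havoid, hb⟩
      refine ⟨h0, fun i hi1 hin => ?_, hb⟩
      have := havoid ⟨i, by omega⟩ (by simpa using hi1) (by simpa using hin)
      simpa using this
  rw [P_cyl_sum p hnn hm y Pm hP (n+1)
    (fun g : Fin (n+2) → X => g 0 = y
      ∧ (∀ i : Fin (n+2), 1 ≤ (i:ℕ) → (i:ℕ) ≤ n → g i ∉ S)
      ∧ g (Fin.last (n+1)) = b)
    (fun g hg => hg.1) (evHit S y n b) hE]
  congr 1
  rw [Finset.sum_filter, ← comb_hit p S n y b]
  exact Finset.sum_congr rfl fun g _ => if_congr Iff.rfl (extend_prod p g) rfl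

lemma P_evAvoid (p : Matrix X X ℝ) (hnn : ∀ a b, 0 ≤ p a b)
    (hm : ∀ s : Set X, MeasurableSet s) (y : X) (Pm : Measure (ℕ → X))
    (hP : ∀ (k : ℕ) (f : ℕ → X), f 0 = y →
      Pm {ω | ∀ i ≤ k, ω i = f i} = ∏ i ∈ Finset.range k, ENNReal.ofReal (p (f i) (f (i+1))))
    (S : Finset X) (n : ℕ) :
    Pm (evAvoid S y n) = ENNReal.ofReal (∑ b, ((Qm p S) ^ n) y b) := by
  classical
  have hE : ∀ ω : ℕ → X, ω ∈ evAvoid S y n ↔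
      (fun g : Fin (n+1) → X => g 0 = y
        ∧ (∀ i : Fin (n+1), 1 ≤ (i:ℕ) → (i:ℕ) ≤ n → g i ∉ S)) (fun i : Fin (n+1) => ω i) := by
    intro ω
    constructor
    · rintro ⟨h0, havoid⟩
      exact ⟨h0, fun i hi1 hin => havoid (i:ℕ) hi1 hin⟩
    · rintro ⟨h0, havoid⟩
      refine ⟨h0, fun i hi1 hin => ?_⟩
      have := havoid ⟨i, by omega⟩ (by simpa using hi1) (by simpa using hin)
      simpa using this
  rw [P_cyl_sum p hnn hm y Pm hP n
    (fun g : Fin (n+1) → X => g 0 = y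
      ∧ (∀ i : Fin (n+1), 1 ≤ (i:ℕ) → (i:ℕ) ≤ n → g i ∉ S))
    (fun g hg => hg.1) (evAvoid S y n) hE]
  congr 1
  rw [Finset.sum_filter, ← comb_avoid p S n y]
  exact Finset.sum_congr rfl fun g _ => if_congr Iff.rfl (extend_prod p g) rfl

end Meas3
lemma avoid_zero (p : Matrix X X ℝ) (S : Finset X) (x : X) :
    ∑ b, ((Qm p S) ^ 0) x b = 1 := by
  simp [Matrix.one_apply]

lemma exists_hit (p : Matrix X X ℝ) (hnn : ∀ a b, 0 ≤ p a b)
    (hirr : ∀ a b : X, ∃ n : ℕ, 0 < (p ^ n) a b) (z : X) (hcard : ∃ w : X, w ≠ z) :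
    ∀ x, ∃ n, 1 ≤ n ∧ 0 < (p ^ n) x z := by
  have pos1 : ∀ a b : X, a ≠ b → ∃ n, 1 ≤ n ∧ 0 < (p ^ n) a b := by
    intro a b hab
    obtain ⟨n, hn⟩ := hirr a b
    refine ⟨n, ?_, hn⟩
    rcases Nat.eq_zero_or_pos n with rfl | h
    · rw [pow_zero, Matrix.one_apply_ne hab] at hn
      exact absurd hn (lt_irrefl 0)
    · exact h
  intro x
  rcases eq_or_ne x z with rfl | hxz
  · obtain ⟨w, hw⟩ := hcard
    obtain ⟨n1, hn1, h1⟩ := pos1 x w (fun h => hw (h.symm))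
    obtain ⟨n2, hn2, h2⟩ := pos1 w x hw
    refine ⟨n1 + n2, by omega, ?_⟩
    rw [pow_add, Matrix.mul_apply]
    have hterm : 0 < (p ^ n1) x w * (p ^ n2) w x := mul_pos h1 h2
    have hle : (p ^ n1) x w * (p ^ n2) w x ≤ ∑ c, (p ^ n1) x c * (p ^ n2) c x :=
      Finset.single_le_sum
        (fun c _ => mul_nonneg (pow_nonneg_entry hnn n1 x c) (pow_nonneg_entry hnn n2 c x))
        (Finset.mem_univ w)
    linarith
  · exact pos1 x z hxz

lemma avoid_tendsto_zero (p : Matrix X X ℝ) (hnn : ∀ a b, 0 ≤ p a b)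
    (hrow : ∀ a, ∑ b, p a b = 1) (z : X)
    (hhit : ∀ x : X, ∃ n, 1 ≤ n ∧ 0 < (p ^ n) x z) (y : X) :
    Tendsto (fun N => ∑ b, ((Qm p {z}) ^ N) y b) atTop (nhds 0) := by
  classical
  haveI : Nonempty X := ⟨y⟩
  choose nf hn1 hnpos using hhit
  set N0 : ℕ := Finset.univ.sup nf with hN0
  have hN0pos : 1 ≤ N0 := le_trans (hn1 y) (Finset.le_sup (Finset.mem_univ y))
  set δ : ℝ := Finset.univ.inf' Finset.univ_nonempty (fun x => (p ^ (nf x)) x z) with hδd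
  have hδpos : 0 < δ :=
    (Finset.lt_inf'_iff _).mpr fun x _ => hnpos x
  have hδ1 : δ ≤ 1 :=
    le_trans (Finset.inf'_le _ (Finset.mem_univ y)) (pow_entry_le_one hnn hrow _ y z)
  have hbound : ∀ x, ∑ b, ((Qm p {z}) ^ N0) x b ≤ 1 - δ := by
    intro x
    have h1 : ∑ b, ((Qm p {z}) ^ N0) x b ≤ ∑ b, ((Qm p {z}) ^ (nf x)) x b :=
      avoid_antitone hnn hrow {z} (Finset.le_sup (Finset.mem_univ x)) x
    have htel := telescope hrow {z} x (nf x)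
    have hhits : (p ^ (nf x)) x z ≤ ∑ m ∈ range (nf x), ∑ b ∈ {z}, ((Qm p {z}) ^ m * p) x b := by
      have := hit_ge_pow hnn hrow z x (hn1 x)
      simpa [Finset.sum_singleton] using this
    have hδle : δ ≤ (p ^ (nf x)) x z := Finset.inf'_le _ (Finset.mem_univ x)
    linarith
  have hgeom : ∀ k : ℕ, ∀ x, ∑ b, ((Qm p {z}) ^ (k * N0)) x b ≤ (1 - δ) ^ k := by
    intro k
    induction k with
    | zero => intro x; rw [zero_mul, avoid_zero, pow_zero]
    | succ k ih =>
        intro x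
        have : (k+1) * N0 = k * N0 + N0 := by ring
        rw [this]
        calc ∑ b, ((Qm p {z}) ^ (k * N0 + N0)) x b
            ≤ (∑ b, ((Qm p {z}) ^ (k * N0)) x b) * (1 - δ) :=
              avoid_submult hnn {z} (k * N0) N0 x (1 - δ) hbound
          _ ≤ (1 - δ) ^ k * (1 - δ) :=
              mul_le_mul_of_nonneg_right (ih x) (by linarith)
          _ = (1 - δ) ^ (k + 1) := by ring
  have hsq : ∀ N, ∑ b, ((Qm p {z}) ^ N) y b ≤ (1 - δ) ^ (N / N0) := by
    intro N
    calc ∑ b, ((Qm p {z}) ^ N) y b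
        ≤ ∑ b, ((Qm p {z}) ^ ((N / N0) * N0)) y b :=
          avoid_antitone hnn hrow {z} (Nat.div_mul_le_self N N0) y
      _ ≤ (1 - δ) ^ (N / N0) := hgeom _ y
  refine squeeze_zero (fun N => avoid_nonneg hnn {z} N y) hsq ?_
  have hdiv : Tendsto (fun N : ℕ => N / N0) atTop atTop := by
    refine tendsto_atTop_atTop.mpr fun b => ⟨b * N0, fun n hn => ?_⟩
    exact (Nat.le_div_iff_mul_le (by omega)).mpr hn
  exact (tendsto_pow_atTop_nhds_zero_of_lt_one (by linarith) (by linarith)).comp hdiv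
section Meas4
variable [MeasurableSpace X]

lemma evHit_meas (hm : ∀ s : Set X, MeasurableSet s) (S : Finset X) (y : X) (n : ℕ) (b : X) :
    MeasurableSet (evHit S y n b) := by
  have he : evHit S y n b = ((fun ω : ℕ → X => ω 0) ⁻¹' {y})
      ∩ ((⋂ (i : ℕ) (_ : 1 ≤ i) (_ : i ≤ n), (fun ω : ℕ → X => ω i) ⁻¹' (↑S : Set X)ᶜ)
        ∩ ((fun ω : ℕ → X => ω (n+1)) ⁻¹' {b})) := by
    ext ω
    simp only [evHit, Set.mem_setOf_eq, Set.mem_inter_iff, Set.mem_preimage,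
      Set.mem_singleton_iff, Set.mem_iInter, Set.mem_compl_iff, Finset.mem_coe]
    try tauto
  rw [he]
  exact (measurable_pi_apply 0 (hm _)).inter
    ((MeasurableSet.iInter fun i => MeasurableSet.iInter fun _ =>
        MeasurableSet.iInter fun _ => measurable_pi_apply i (hm _)).inter
      (measurable_pi_apply _ (hm _)))

lemma evAvoid_meas (hm : ∀ s : Set X, MeasurableSet s) (S : Finset X) (y : X) (n : ℕ) :
    MeasurableSet (evAvoid S y n) := by
  have he : evAvoid S y n = ((fun ω : ℕ → X => ω 0) ⁻¹' {y})
      ∩ (⋂ (i : ℕ) (_ : 1 ≤ i) (_ : i ≤ n), (fun ω : ℕ → X => ω i) ⁻¹' (↑S : Set X)ᶜ) := by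
    ext ω
    simp only [evAvoid, Set.mem_setOf_eq, Set.mem_inter_iff, Set.mem_preimage,
      Set.mem_singleton_iff, Set.mem_iInter, Set.mem_compl_iff, Finset.mem_coe]
  rw [he]
  exact (measurable_pi_apply 0 (hm _)).inter
    (MeasurableSet.iInter fun i => MeasurableSet.iInter fun _ =>
      MeasurableSet.iInter fun _ => measurable_pi_apply i (hm _))

lemma P_start (p : Matrix X X ℝ) (y : X) (Pm : Measure (ℕ → X))
    (hP : ∀ (k : ℕ) (f : ℕ → X), f 0 = y →
      Pm {ω | ∀ i ≤ k, ω i = f i} = ∏ i ∈ Finset.range k, ENNReal.ofReal (p (f i) (f (i+1)))) :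
    Pm {ω : ℕ → X | ω 0 = y} = 1 := by
  have hf := hP 0 (fun _ => y) rfl
  have hset : {ω : ℕ → X | ∀ i ≤ 0, ω i = y} = {ω : ℕ → X | ω 0 = y} := by
    ext ω
    constructor
    · intro h; exact h 0 (le_refl 0)
    · intro h i hi
      have : i = 0 := by omega
      rw [this]; exact h
  rw [hset] at hf
  simpa using hf

lemma P_start_compl (p : Matrix X X ℝ) (hm : ∀ s : Set X, MeasurableSet s) (y : X)
    (Pm : Measure (ℕ → X)) [IsProbabilityMeasure Pm]
    (hP : ∀ (k : ℕ) (f : ℕ → X), f 0 = y →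
      Pm {ω | ∀ i ≤ k, ω i = f i} = ∏ i ∈ Finset.range k, ENNReal.ofReal (p (f i) (f (i+1)))) :
    Pm {ω : ℕ → X | ω 0 ≠ y} = 0 := by
  have hmeas : MeasurableSet {ω : ℕ → X | ω 0 = y} := by
    have : {ω : ℕ → X | ω 0 = y} = (fun ω : ℕ → X => ω 0) ⁻¹' {y} := rfl
    rw [this]
    exact measurable_pi_apply 0 (hm {y})
  have hc : {ω : ℕ → X | ω 0 ≠ y} = {ω : ℕ → X | ω 0 = y}ᶜ := rfl
  rw [hc, measure_compl hmeas (measure_ne_top _ _), P_start p y Pm hP]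
  simp

lemma P_never_hit (p : Matrix X X ℝ) (hnn : ∀ a b, 0 ≤ p a b)
    (hrow : ∀ a, ∑ b, p a b = 1) (hm : ∀ s : Set X, MeasurableSet s)
    (z : X) (hhit : ∀ x : X, ∃ n, 1 ≤ n ∧ 0 < (p ^ n) x z) (y : X)
    (Pm : Measure (ℕ → X)) [IsProbabilityMeasure Pm]
    (hP : ∀ (k : ℕ) (f : ℕ → X), f 0 = y →
      Pm {ω | ∀ i ≤ k, ω i = f i} = ∏ i ∈ Finset.range k, ENNReal.ofReal (p (f i) (f (i+1)))) :
    Pm {ω : ℕ → X | ∀ t : ℕ, 1 ≤ t → ω t ≠ z} = 0 := by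
  have hub : ∀ K : ℕ, Pm {ω : ℕ → X | ∀ t : ℕ, 1 ≤ t → ω t ≠ z}
      ≤ ENNReal.ofReal (∑ b, ((Qm p {z}) ^ K) y b) := by
    intro K
    have hsub : {ω : ℕ → X | ∀ t : ℕ, 1 ≤ t → ω t ≠ z}
        ⊆ evAvoid {z} y K ∪ {ω : ℕ → X | ω 0 ≠ y} := by
      intro ω hω
      by_cases h0 : ω 0 = y
      · exact Or.inl ⟨h0, fun i hi1 _ => by
          simp only [Finset.mem_singleton]
          exact hω i hi1⟩
      · exact Or.inr h0
    calc Pm {ω : ℕ → X | ∀ t : ℕ, 1 ≤ t → ω t ≠ z}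
        ≤ Pm (evAvoid {z} y K) + Pm {ω : ℕ → X | ω 0 ≠ y} :=
          le_trans (measure_mono hsub) (measure_union_le _ _)
      _ = ENNReal.ofReal (∑ b, ((Qm p {z}) ^ K) y b) := by
          rw [P_evAvoid p hnn hm y Pm hP {z} K, P_start_compl p hm y Pm hP, add_zero]
  have htend : Tendsto (fun K => ENNReal.ofReal (∑ b, ((Qm p {z}) ^ K) y b)) atTop (nhds 0) := by
    have := ENNReal.tendsto_ofReal (avoid_tendsto_zero p hnn hrow z hhit y)
    simpa using this
  have hle := ge_of_tendsto' htend hub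
  simpa using hle

end Meas4


lemma evHit_disj {S : Finset X} {y c : X} (hc : c ∈ S) {m m' : ℕ} (hmm : m < m') :
    Disjoint (evHit S y m c) (evHit S y m' c) := by
  rw [Set.disjoint_left]
  rintro ω ⟨-, -, hb⟩ ⟨-, hav, -⟩
  exact (hav (m+1) (by omega) (by omega)) (hb ▸ hc)

lemma hit_subset (S : Finset X) {y z w : X} (hzw : z ≠ w) (hwS : w ∈ S) (m : ℕ) :
    evHit S y m z ∩ {ω : ℕ → X | ∃ t, 0 < t ∧ ω t = w}
      ⊆ {ω : ℕ → X | retTime {z} ω < retTime {w} ω} := by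
  rintro ω ⟨⟨h0, hav, hb⟩, hex⟩
  have hτz : retTime {z} ω ≤ m + 1 := Nat.sInf_le ⟨by omega, hb⟩
  have hmem : retTime {w} ω ∈ {t : ℕ | 0 < t ∧ ω t ∈ ({w} : Set X)} := by
    apply Nat.sInf_mem
    obtain ⟨t, ht, hw⟩ := hex
    exact ⟨t, ht, hw⟩
  obtain ⟨hpos, hwmem⟩ := hmem
  have hwval : ω (retTime {w} ω) = w := hwmem
  have hne : ¬ (retTime {w} ω ≤ m + 1) := by
    intro hle
    rcases Nat.lt_or_ge (retTime {w} ω) (m+1) with hlt | hge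
    · exact (hav (retTime {w} ω) (by omega) (by omega)) (by rw [hwval]; exact hwS)
    · have heq : retTime {w} ω = m+1 := by omega
      rw [heq, hb] at hwval
      exact hzw hwval
  show retTime {z} ω < retTime {w} ω
  omega

lemma T_subset (S : Finset X) {y z w : X}
    (hS : ∀ u, u ∈ S → u = z ∨ u = w) (N : ℕ) :
    {ω : ℕ → X | retTime {z} ω < retTime {w} ω}
      ⊆ ((⋃ m ∈ Finset.range N, evHit S y m z) ∪ evAvoid {z} y N)
        ∪ {ω : ℕ → X | ω 0 ≠ y} := by
  intro ω hω
  have hτ : retTime {z} ω < retTime {w} ω := hω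
  by_cases h0 : ω 0 = y
  swap
  · exact Or.inr h0
  left
  by_cases hexz : ∃ t : ℕ, 0 < t ∧ ω t ∈ ({z} : Set X)
  · have hmem : retTime {z} ω ∈ {t : ℕ | 0 < t ∧ ω t ∈ ({z} : Set X)} := Nat.sInf_mem hexz
    obtain ⟨hpos, hzval⟩ := hmem
    have hminz : ∀ i, 0 < i → i < retTime {z} ω → ω i ≠ z := by
      intro i hi hilt hieq
      have : retTime {z} ω ≤ i := Nat.sInf_le ⟨hi, hieq⟩
      omega
    by_cases hN : retTime {z} ω ≤ N
    · left
      refine Set.mem_biUnion (Finset.mem_range.mpr (by omega : retTime {z} ω - 1 < N)) ?_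
      have hm1 : retTime {z} ω - 1 + 1 = retTime {z} ω := by omega
      refine ⟨h0, ?_, by rw [hm1]; exact hzval⟩
      intro i hi1 hin hiS
      rcases hS (ω i) hiS with hz | hw
      · exact hminz i (by omega) (by omega) hz
      · have : retTime {w} ω ≤ i := Nat.sInf_le ⟨by omega, hw⟩
        omega
    · right
      refine ⟨h0, fun i hi1 hin => ?_⟩
      simp only [Finset.mem_singleton]
      exact hminz i (by omega) (by omega)
  · right
    push_neg at hexz
    refine ⟨h0, fun i hi1 _ => ?_⟩
    simp only [Finset.mem_singleton]
    intro hiz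
    exact (hexz i (by omega)) hiz
end S4

/-- For an irreducible Markov chain on a finite state space, reversible with
respect to `μ`, and pairwise distinct states `y, y₁, y₂`:
`P_y(τ_{y₁} < τ_{y₂}) ≤ cap(y,y₁)/cap(y,y₂)` where `cap(z,w) = μ(z)·P_z(τ_w < τ_z⁺)`. -/
theorem stmt4 {X : Type*} [Fintype X] [DecidableEq X] [MeasurableSpace X]
    (p : Matrix X X ℝ) (μ : X → ℝ)
    (hnn : ∀ a b, 0 ≤ p a b) (hrow : ∀ a, ∑ b, p a b = 1)
    (hirr : ∀ a b : X, ∃ n : ℕ, 0 < (p ^ n) a b)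
    (hμpos : ∀ x, 0 < μ x) (hμsum : ∑ x, μ x = 1)
    -- reversibility :
    (hrev : ∀ a b : X, μ a * p a b = μ b * p b a)
    (P : X → Measure (ℕ → X)) (hprob : ∀ x, IsProbabilityMeasure (P x))
    (hP : ∀ (x : X) (n : ℕ) (f : ℕ → X), f 0 = x →
      P x {ω | ∀ i ≤ n, ω i = f i}
        = ∏ i ∈ Finset.range n, ENNReal.ofReal (p (f i) (f (i+1))))
    (y y₁ y₂ : X) (h1 : y ≠ y₁) (h2 : y ≠ y₂) (h12 : y₁ ≠ y₂) :
    (P y {ω | retTime {y₁} ω < retTime {y₂} ω}).toReal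
      ≤ (μ y * (P y {ω | retTime {y₁} ω < retTime {y} ω}).toReal)
        / (μ y * (P y {ω | retTime {y₂} ω < retTime {y} ω}).toReal) := by

  classical
  haveI := hprob y
  have hm : ∀ s : Set X, MeasurableSet s :=
    S4.all_measurable p hnn hrow hirr P hP y y₁ y₂ h1 h2 h12
  have hPy : ∀ (k : ℕ) (f : ℕ → X), f 0 = y →
      P y {ω | ∀ i ≤ k, ω i = f i} = ∏ i ∈ Finset.range k, ENNReal.ofReal (p (f i) (f (i+1))) :=
    fun k f hf => hP y k f hf
  -- hitting properties
  have hhy : ∀ x, ∃ n, 1 ≤ n ∧ 0 < (p ^ n) x y :=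
    S4.exists_hit p hnn hirr y ⟨y₁, fun h => h1 h.symm⟩
  have hh1 : ∀ x, ∃ n, 1 ≤ n ∧ 0 < (p ^ n) x y₁ :=
    S4.exists_hit p hnn hirr y₁ ⟨y, h1⟩
  have hh2 : ∀ x, ∃ n, 1 ≤ n ∧ 0 < (p ^ n) x y₂ :=
    S4.exists_hit p hnn hirr y₂ ⟨y, h2⟩
  -- null sets
  have hnull0 : P y {ω : ℕ → X | ω 0 ≠ y} = 0 := S4.P_start_compl p hm y (P y) hPy
  have hnully : P y {ω : ℕ → X | ∀ t, 1 ≤ t → ω t ≠ y} = 0 :=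
    S4.P_never_hit p hnn hrow hm y hhy y (P y) hPy
  have hnull1 : P y {ω : ℕ → X | ∀ t, 1 ≤ t → ω t ≠ y₁} = 0 :=
    S4.P_never_hit p hnn hrow hm y₁ hh1 y (P y) hPy
  have hnull2 : P y {ω : ℕ → X | ∀ t, 1 ≤ t → ω t ≠ y₂} = 0 :=
    S4.P_never_hit p hnn hrow hm y₂ hh2 y (P y) hPy
  -- real quantities
  set ℓ : ℝ := (P y {ω | retTime {y₁} ω < retTime {y₂} ω}).toReal with hℓdef
  set a : ℝ := (P y {ω | retTime {y₁} ω < retTime {y} ω}).toReal with hadef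
  set bb : ℝ := (P y {ω | retTime {y₂} ω < retTime {y} ω}).toReal with hbbdef
  have hℓ0 : 0 ≤ ℓ := ENNReal.toReal_nonneg
  have hb0 : 0 ≤ bb := ENNReal.toReal_nonneg
  -- generic lower bound on target probabilities
  have hlower : ∀ (S : Finset X) (z w : X), z ≠ w → w ∈ S → z ∈ S →
      P y {ω : ℕ → X | ∀ t, 1 ≤ t → ω t ≠ w} = 0 → ∀ N : ℕ,
      ENNReal.ofReal (∑ m ∈ Finset.range N, ((S4.Qm p S) ^ m * p) y z)
        ≤ P y {ω : ℕ → X | retTime {z} ω < retTime {w} ω} := by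
    intro S z w hzw hwS hzS hnw N
    have hEHle : ∀ m, P y (S4.evHit S y m z)
        ≤ P y (S4.evHit S y m z ∩ {ω : ℕ → X | ∃ t, 0 < t ∧ ω t = w}) := by
      intro m
      have hsplit := measure_le_inter_add_diff (P y) (S4.evHit S y m z)
        {ω : ℕ → X | ∃ t, 0 < t ∧ ω t = w}
      have hdiff : S4.evHit S y m z \ {ω : ℕ → X | ∃ t, 0 < t ∧ ω t = w}
          ⊆ {ω : ℕ → X | ∀ t, 1 ≤ t → ω t ≠ w} := by
        rintro ω ⟨-, hωH⟩ t ht heq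
        exact hωH ⟨t, by omega, heq⟩
      calc P y (S4.evHit S y m z)
          ≤ P y (S4.evHit S y m z ∩ {ω : ℕ → X | ∃ t, 0 < t ∧ ω t = w})
            + P y (S4.evHit S y m z \ {ω : ℕ → X | ∃ t, 0 < t ∧ ω t = w}) := hsplit
        _ ≤ P y (S4.evHit S y m z ∩ {ω : ℕ → X | ∃ t, 0 < t ∧ ω t = w}) + 0 :=
            add_le_add_right (le_trans (measure_mono hdiff) (le_of_eq hnw)) _
        _ = _ := add_zero _
    have hHmeas : MeasurableSet {ω : ℕ → X | ∃ t, 0 < t ∧ ω t = w} := by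
      have he : {ω : ℕ → X | ∃ t, 0 < t ∧ ω t = w}
          = ⋃ (t : ℕ) (_ : 0 < t), (fun ω : ℕ → X => ω t) ⁻¹' {w} := by
        ext ω
        simp only [Set.mem_setOf_eq, Set.mem_iUnion, Set.mem_preimage, Set.mem_singleton_iff]
        constructor
        · rintro ⟨t, ht, hw⟩; exact ⟨t, ht, hw⟩
        · rintro ⟨t, ht, hw⟩; exact ⟨t, ht, hw⟩
      rw [he]
      exact MeasurableSet.iUnion fun t => MeasurableSet.iUnion fun _ =>
        measurable_pi_apply t (hm _)
    have hdisj : (↑(Finset.range N) : Set ℕ).PairwiseDisjoint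
        (fun m => S4.evHit S y m z ∩ {ω : ℕ → X | ∃ t, 0 < t ∧ ω t = w}) := by
      intro m _ m' _ hne
      have hbase : Disjoint (S4.evHit S y m z) (S4.evHit S y m' z) := by
        rcases hne.lt_or_gt with h | h
        · exact S4.evHit_disj hzS h
        · exact (S4.evHit_disj hzS h).symm
      exact Disjoint.mono Set.inter_subset_left Set.inter_subset_left hbase
    calc ENNReal.ofReal (∑ m ∈ Finset.range N, ((S4.Qm p S) ^ m * p) y z)
        = ∑ m ∈ Finset.range N, ENNReal.ofReal (((S4.Qm p S) ^ m * p) y z) :=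
          ENNReal.ofReal_sum_of_nonneg fun m _ => S4.hitsum_nonneg hnn S m y z
      _ = ∑ m ∈ Finset.range N, P y (S4.evHit S y m z) :=
          Finset.sum_congr rfl fun m _ => (S4.P_evHit p hnn hm y (P y) hPy S m z).symm
      _ ≤ ∑ m ∈ Finset.range N,
            P y (S4.evHit S y m z ∩ {ω : ℕ → X | ∃ t, 0 < t ∧ ω t = w}) :=
          Finset.sum_le_sum fun m _ => hEHle m
      _ = P y (⋃ m ∈ Finset.range N,
            S4.evHit S y m z ∩ {ω : ℕ → X | ∃ t, 0 < t ∧ ω t = w}) :=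
          (measure_biUnion_finset hdisj fun m _ =>
            (S4.evHit_meas hm S y m z).inter hHmeas).symm
      _ ≤ P y {ω : ℕ → X | retTime {z} ω < retTime {w} ω} :=
          measure_mono (Set.iUnion₂_subset fun m _ => S4.hit_subset S hzw hwS m)
  -- generic upper bound
  have hupper : ∀ (S : Finset X) (z w : X), (∀ u ∈ S, u = z ∨ u = w) → ∀ N : ℕ,
      P y {ω : ℕ → X | retTime {z} ω < retTime {w} ω}
        ≤ ENNReal.ofReal ((∑ m ∈ Finset.range N, ((S4.Qm p S) ^ m * p) y z)
            + ∑ b, ((S4.Qm p {z}) ^ N) y b) := by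
    intro S z w hSzw N
    calc P y {ω : ℕ → X | retTime {z} ω < retTime {w} ω}
        ≤ P y (((⋃ m ∈ Finset.range N, S4.evHit S y m z) ∪ S4.evAvoid {z} y N)
            ∪ {ω : ℕ → X | ω 0 ≠ y}) :=
          measure_mono (S4.T_subset S hSzw N)
      _ ≤ P y ((⋃ m ∈ Finset.range N, S4.evHit S y m z) ∪ S4.evAvoid {z} y N)
            + P y {ω : ℕ → X | ω 0 ≠ y} := measure_union_le _ _
      _ = P y ((⋃ m ∈ Finset.range N, S4.evHit S y m z) ∪ S4.evAvoid {z} y N) := by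
          rw [hnull0, add_zero]
      _ ≤ P y (⋃ m ∈ Finset.range N, S4.evHit S y m z) + P y (S4.evAvoid {z} y N) :=
          measure_union_le _ _
      _ ≤ (∑ m ∈ Finset.range N, P y (S4.evHit S y m z)) + P y (S4.evAvoid {z} y N) :=
          add_le_add_left (measure_biUnion_finset_le _ _) _
      _ = ENNReal.ofReal (∑ m ∈ Finset.range N, ((S4.Qm p S) ^ m * p) y z)
            + ENNReal.ofReal (∑ b, ((S4.Qm p {z}) ^ N) y b) := by
          rw [S4.P_evAvoid p hnn hm y (P y) hPy {z} N]
          congr 1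
          rw [ENNReal.ofReal_sum_of_nonneg fun m _ => S4.hitsum_nonneg hnn S m y z]
          exact Finset.sum_congr rfl fun m _ => S4.P_evHit p hnn hm y (P y) hPy S m z
      _ = ENNReal.ofReal ((∑ m ∈ Finset.range N, ((S4.Qm p S) ^ m * p) y z)
            + ∑ b, ((S4.Qm p {z}) ^ N) y b) :=
          (ENNReal.ofReal_add
            (Finset.sum_nonneg fun m _ => S4.hitsum_nonneg hnn S m y z)
            (S4.avoid_nonneg hnn {z} N y)).symm
  -- real-valued consequences
  have hLLreal : ∀ K, (∑ m ∈ Finset.range K, ((S4.Qm p {y₁, y₂}) ^ m * p) y y₁) ≤ ℓ := by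
    intro K
    have := hlower {y₁, y₂} y₁ y₂ h12 (by simp) (by simp) hnull2 K
    exact (ENNReal.ofReal_le_iff_le_toReal (measure_ne_top _ _)).mp this
  have hAAreal : ∀ K, (∑ m ∈ Finset.range K, ((S4.Qm p {y, y₁}) ^ m * p) y y₁) ≤ a := by
    intro K
    have := hlower {y, y₁} y₁ y (fun h => h1 h.symm) (by simp) (by simp) hnully K
    exact (ENNReal.ofReal_le_iff_le_toReal (measure_ne_top _ _)).mp this
  have hlreal : ∀ N, ℓ ≤ (∑ m ∈ Finset.range N, ((S4.Qm p {y₁, y₂}) ^ m * p) y y₁)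
      + ∑ b, ((S4.Qm p {y₁}) ^ N) y b := by
    intro N
    refine ENNReal.toReal_le_of_le_ofReal
      (add_nonneg (Finset.sum_nonneg fun m _ => S4.hitsum_nonneg hnn _ m y y₁)
        (S4.avoid_nonneg hnn _ N y)) ?_
    exact hupper {y₁, y₂} y₁ y₂ (by intro u hu; simpa using hu) N
  have hbreal : ∀ N, bb ≤ (∑ m ∈ Finset.range N, ((S4.Qm p {y, y₂}) ^ m * p) y y₂)
      + ∑ b, ((S4.Qm p {y₂}) ^ N) y b := by
    intro N
    refine ENNReal.toReal_le_of_le_ofReal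
      (add_nonneg (Finset.sum_nonneg fun m _ => S4.hitsum_nonneg hnn _ m y y₂)
        (S4.avoid_nonneg hnn _ N y)) ?_
    refine hupper {y, y₂} y₂ y (by intro u hu; simp at hu; tauto) N
  -- positivity of bb
  have hbbpos : 0 < bb := by
    have hex : ∃ n, 0 < (p ^ n) y y₂ := by
      obtain ⟨n, -, hn⟩ := hh2 y; exact ⟨n, hn⟩
    have hfind := Nat.find_spec hex
    have hn1 : 1 ≤ Nat.find hex := by
      by_contra hc
      push_neg at hc
      have h0 : Nat.find hex = 0 := by omega
      rw [h0, pow_zero, Matrix.one_apply_ne h2] at hfind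
      exact lt_irrefl 0 hfind
    have hposQ := S4.min_path_pos hnn y y₂ h2 hn1 hfind
      (fun m _ hm2 => Nat.find_min hex hm2)
    have hBBpos : 0 < ∑ m ∈ Finset.range (Nat.find hex),
        ((S4.Qm p {y, y₂}) ^ m * p) y y₂ := by
      refine lt_of_lt_of_le hposQ ?_
      refine Finset.single_le_sum (fun m _ => S4.hitsum_nonneg hnn _ m y y₂) ?_
      exact Finset.mem_range.mpr (by omega)
    have hlow := hlower {y, y₂} y₂ y (fun h => h2 h.symm) (by simp) (by simp) hnully
      (Nat.find hex)
    have hPpos : 0 < P y {ω : ℕ → X | retTime {y₂} ω < retTime {y} ω} :=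
      lt_of_lt_of_le (ENNReal.ofReal_pos.mpr hBBpos) hlow
    rw [hbbdef]
    exact ENNReal.toReal_pos (ne_of_gt hPpos) (measure_ne_top _ _)
  -- the renewal chain
  have hsubA : ({y, y₁} : Finset X) ⊆ insert y {y₁, y₂} := by
    intro u hu; simp at hu ⊢; tauto
  have hsubB : ({y, y₂} : Finset X) ⊆ insert y {y₁, y₂} := by
    intro u hu; simp at hu ⊢; tauto
  have hchain : ∀ N, (∑ m ∈ Finset.range N, ((S4.Qm p {y₁, y₂}) ^ m * p) y y₁)
      + ℓ * (∑ m ∈ Finset.range N, ((S4.Qm p {y, y₂}) ^ m * p) y y₂) ≤ a + ℓ := by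
    intro N
    have hren := S4.renewal hnn y y₁ y₂ h1 h2 ℓ hLLreal N
    have hq : (∑ m ∈ Finset.range N, ((S4.Qm p (insert y {y₁, y₂})) ^ m * p) y y₁)
        ≤ ∑ m ∈ Finset.range N, ((S4.Qm p {y, y₁}) ^ m * p) y y₁ :=
      Finset.sum_le_sum fun m _ => S4.hitsum_mono hnn hsubA m y y₁
    have hr : (∑ t ∈ Finset.range N, ((S4.Qm p (insert y {y₁, y₂})) ^ t * p) y y)
        ≤ ∑ m ∈ Finset.range N, ((S4.Qm p {y, y₂}) ^ m * p) y y :=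
      Finset.sum_le_sum fun m _ => S4.hitsum_mono hnn hsubB m y y
    have htel := S4.telescope hrow {y, y₂} y N
    have hpair : ∀ m ∈ Finset.range N, ∑ b ∈ ({y, y₂} : Finset X),
        ((S4.Qm p {y, y₂}) ^ m * p) y b
        = ((S4.Qm p {y, y₂}) ^ m * p) y y + ((S4.Qm p {y, y₂}) ^ m * p) y y₂ :=
      fun m _ => Finset.sum_pair h2
    rw [Finset.sum_congr rfl hpair, Finset.sum_add_distrib] at htel
    have havnn := S4.avoid_nonneg hnn {y, y₂} N y
    have hAa := hAAreal N
    have hmul : (∑ t ∈ Finset.range N, ((S4.Qm p (insert y {y₁, y₂})) ^ t * p) y y) * ℓ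
        ≤ (∑ m ∈ Finset.range N, ((S4.Qm p {y, y₂}) ^ m * p) y y) * ℓ :=
      mul_le_mul_of_nonneg_right hr hℓ0
    have h5 : (∑ m ∈ Finset.range N, ((S4.Qm p {y, y₂}) ^ m * p) y y) * ℓ
        ≤ (1 - (∑ m ∈ Finset.range N, ((S4.Qm p {y, y₂}) ^ m * p) y y₂)) * ℓ :=
      mul_le_mul_of_nonneg_right (by linarith) hℓ0
    have h6 : (1 - (∑ m ∈ Finset.range N, ((S4.Qm p {y, y₂}) ^ m * p) y y₂)) * ℓ
        = ℓ - ℓ * (∑ m ∈ Finset.range N, ((S4.Qm p {y, y₂}) ^ m * p) y y₂) := by ring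
    linarith
  -- epsilon argument
  have hmain : ℓ * bb ≤ a := by
    refine le_of_forall_pos_le_add fun ε hε => ?_
    have htz1 : Tendsto (fun N => ∑ b, ((S4.Qm p {y₁}) ^ N) y b) atTop (nhds 0) :=
      S4.avoid_tendsto_zero p hnn hrow y₁ hh1 y
    have htz2 : Tendsto (fun N => ∑ b, ((S4.Qm p {y₂}) ^ N) y b) atTop (nhds 0) :=
      S4.avoid_tendsto_zero p hnn hrow y₂ hh2 y
    have hev := (htz1.eventually_lt_const (show (0:ℝ) < ε/2 by positivity)).and
      (htz2.eventually_lt_const (show (0:ℝ) < ε/(2*(ℓ+1)) by positivity))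
    obtain ⟨N, hN1, hN2⟩ := hev.exists
    have hc := hchain N
    have hl := hlreal N
    have hb := hbreal N
    have he2nn : 0 ≤ ∑ b, ((S4.Qm p {y₂}) ^ N) y b := S4.avoid_nonneg hnn _ N y
    have hBB0 : 0 ≤ ∑ m ∈ Finset.range N, ((S4.Qm p {y, y₂}) ^ m * p) y y₂ :=
      Finset.sum_nonneg fun m _ => S4.hitsum_nonneg hnn _ m y y₂
    have k1 : ℓ * bb ≤ ℓ * (∑ m ∈ Finset.range N, ((S4.Qm p {y, y₂}) ^ m * p) y y₂)
        + ℓ * (∑ b, ((S4.Qm p {y₂}) ^ N) y b) := by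
      have := mul_le_mul_of_nonneg_left hb hℓ0
      nlinarith [this]
    have k4 : ℓ * (∑ b, ((S4.Qm p {y₂}) ^ N) y b) ≤ (ℓ+1) * (ε / (2*(ℓ+1))) := by
      have s1 : ℓ * (∑ b, ((S4.Qm p {y₂}) ^ N) y b)
          ≤ (ℓ+1) * (∑ b, ((S4.Qm p {y₂}) ^ N) y b) :=
        mul_le_mul_of_nonneg_right (by linarith) he2nn
      have s2 : (ℓ+1) * (∑ b, ((S4.Qm p {y₂}) ^ N) y b) ≤ (ℓ+1) * (ε / (2*(ℓ+1))) :=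
        mul_le_mul_of_nonneg_left (le_of_lt hN2) (by linarith)
      linarith
    have k5 : (ℓ+1) * (ε / (2*(ℓ+1))) = ε/2 := by
      field_simp
    linarith
  have hfin : ℓ ≤ a / bb := (le_div_iff₀ hbbpos).mpr hmain
  rw [mul_div_mul_left a bb (ne_of_gt (hμpos y))]
  exact hfin
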